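/- Let P be an N×N doubly stochastic matrix with I − P of rank N−1, and let G^{NN}(P) denote the leading (N−1)×(N−1) principal submatrix of I − P. Then det(G^{NN}(P)) = (1/N) det(I − P + (1/N) e eᵀ). -/

import Mathlib

open Matrix

/-- For doubly stochastic P with rank(I − P) = N − 1, the determinant of the
leading principal (N−1)×(N−1) submatrix of I − P equals (1/N)·det(I − P + (1/N)eeᵀ). -/
theorem leading_principal_minor_det (N : ℕ) (P : Matrix (Fin (N + 1)) (Fin (N + 1)) ℝ)
    (hnonneg : ∀ i j, 0 ≤ P i j)
    (hrow : ∀ i, ∑ j, P i j = 1)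
    (hcol : ∀ j, ∑ i, P i j = 1)
    (hrank : (1 - P).rank = N) :
    ((1 - P).submatrix Fin.castSucc Fin.castSucc).det
      = ((N + 1 : ℝ))⁻¹ *
        (1 - P + ((N + 1 : ℝ))⁻¹ • vecMulVec (fun _ => (1 : ℝ)) (fun _ => (1 : ℝ))).det := by
  classical
  set c : ℝ := ((N : ℝ) + 1)⁻¹ with hcdef
  set A : Matrix (Fin (N + 1)) (Fin (N + 1)) ℝ := 1 - P with hAdef
  set B : Matrix (Fin (N + 1)) (Fin (N + 1)) ℝ :=
    A + c • vecMulVec (fun _ => (1 : ℝ)) (fun _ => (1 : ℝ)) with hBdef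
  have hN : ((N : ℝ) + 1) ≠ 0 := by positivity
  have hc1 : ((N : ℝ) + 1) * c = 1 := mul_inv_cancel₀ hN
  have hsum1 : (∑ _k : Fin (N + 1), (1 : ℝ)) = (N : ℝ) + 1 := by
    simp [Finset.sum_const, Finset.card_univ]
  have hArow : ∀ i, ∑ j, A i j = 0 := by
    intro i
    have : ∑ j, A i j = (∑ j, (1 : Matrix (Fin (N+1)) (Fin (N+1)) ℝ) i j) - ∑ j, P i j := by
      simp [hAdef, Finset.sum_sub_distrib]
    rw [this, hrow]
    simp [Matrix.one_apply]
  have hAcol : ∀ j, ∑ i, A i j = 0 := by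
    intro j
    have : ∑ i, A i j = (∑ i, (1 : Matrix (Fin (N+1)) (Fin (N+1)) ℝ) i j) - ∑ i, P i j := by
      simp [hAdef, Finset.sum_sub_distrib]
    rw [this, hcol]
    simp [Matrix.one_apply]
  have hBapp : ∀ i j, B i j = A i j + c := by
    intro i j
    simp [hBdef, vecMulVec_apply]
  have hBrow : ∀ i, ∑ j, B i j = 1 := by
    intro i
    simp_rw [hBapp]
    rw [Finset.sum_add_distrib, hArow, Finset.sum_const, Finset.card_univ, Fintype.card_fin,
      zero_add, nsmul_eq_mul]
    push_cast
    exact hc1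
  have hBcol : ∀ j, ∑ i, B i j = 1 := by
    intro j
    simp_rw [hBapp]
    rw [Finset.sum_add_distrib, hAcol, Finset.sum_const, Finset.card_univ, Fintype.card_fin,
      zero_add, nsmul_eq_mul]
    push_cast
    exact hc1
  -- vectors
  set e : Fin (N + 1) → ℝ := fun _ => 1 with hedef
  set s : Fin (N + 1) → ℝ := Pi.single (Fin.last N) 1 with hsdef
  -- elementary matrices
  set F : Matrix (Fin (N + 1)) (Fin (N + 1)) ℝ := 1 + replicateCol Unit s * replicateRow Unit (e - s) with hFdef
  set G : Matrix (Fin (N + 1)) (Fin (N + 1)) ℝ := 1 + replicateCol Unit (e - s) * replicateRow Unit s with hGdef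
  set H : Matrix (Fin (N + 1)) (Fin (N + 1)) ℝ :=
    1 + replicateCol Unit (-(c • (e - s))) * replicateRow Unit s with hHdef
  have hcr : ∀ (u v : Fin (N + 1) → ℝ) i j, (replicateCol Unit u * replicateRow Unit v) i j = u i * v j := by
    intro u v i j
    simp [Matrix.mul_apply]
  have hdetF : F.det = 1 := by
    rw [hFdef, det_one_add_replicateCol_mul_replicateRow]
    simp [hsdef, dotProduct_single, Pi.sub_apply, hedef]
  have hdetG : G.det = 1 := by
    rw [hGdef, det_one_add_replicateCol_mul_replicateRow]
    simp [hsdef, single_dotProduct, Pi.sub_apply, hedef]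
  have hdetH : H.det = 1 := by
    rw [hHdef, det_one_add_replicateCol_mul_replicateRow]
    simp [hsdef, single_dotProduct, Pi.sub_apply, hedef]
  -- intermediate matrices
  set M1 : Matrix (Fin (N + 1)) (Fin (N + 1)) ℝ :=
    Matrix.of (fun i j => if j = Fin.last N then (1 : ℝ) else B i j) with hM1def
  set M2 : Matrix (Fin (N + 1)) (Fin (N + 1)) ℝ :=
    Matrix.of (fun i j => if i = Fin.last N then (if j = Fin.last N then ((N : ℝ) + 1) else 1)
      else M1 i j) with hM2def
  set M3 : Matrix (Fin (N + 1)) (Fin (N + 1)) ℝ :=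
    Matrix.of (fun i j => if i = Fin.last N then (if j = Fin.last N then ((N : ℝ) + 1) else 1)
      else (if j = Fin.last N then 0 else A i j)) with hM3def
  have h1 : B * G = M1 := by
    ext i j
    rw [Matrix.mul_apply]
    by_cases hj : j = Fin.last N
    · subst hj
      have hGk : ∀ k, G k (Fin.last N) = 1 := by
        intro k
        by_cases hk : k = Fin.last N <;>
          simp [hGdef, hcr, Matrix.one_apply, hk, hsdef, hedef, Pi.single_apply]
      simp_rw [hGk, mul_one]
      rw [hBrow]
      simp [hM1def]
    · have hGk : ∀ k, G k j = if k = j then 1 else 0 := by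
        intro k
        simp [hGdef, hcr, Matrix.one_apply, hsdef, hedef, Pi.single_apply, hj]
      simp_rw [hGk, mul_ite, mul_one, mul_zero]
      rw [Finset.sum_ite_eq' Finset.univ j (fun k => B i k)]
      simp [hM1def, hj]
  have h2 : F * M1 = M2 := by
    ext i j
    rw [Matrix.mul_apply]
    by_cases hi : i = Fin.last N
    · subst hi
      have hFk : ∀ k, F (Fin.last N) k = 1 := by
        intro k
        by_cases hk : k = Fin.last N <;>
          simp [hFdef, hcr, Matrix.one_apply, hk, hsdef, hedef, Pi.single_apply, eq_comm]
      simp_rw [hFk, one_mul]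
      by_cases hj : j = Fin.last N
      · subst hj
        have : ∀ k, M1 k (Fin.last N) = 1 := by intro k; simp [hM1def]
        simp_rw [this]
        simp [hM2def, hsum1]
      · have : ∀ k, M1 k j = B k j := by intro k; simp [hM1def, hj]
        simp_rw [this]
        rw [hBcol]
        simp [hM2def, hj]
    · have hFk : ∀ k, F i k = if i = k then 1 else 0 := by
        intro k
        simp [hFdef, hcr, Matrix.one_apply, hsdef, hedef, Pi.single_apply, hi]
      simp_rw [hFk, ite_mul, one_mul, zero_mul]
      rw [Finset.sum_ite_eq Finset.univ i (fun k => M1 k j)]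
      simp [hM2def, hi]
  have h3 : H * M2 = M3 := by
    ext i j
    rw [Matrix.mul_apply]
    by_cases hi : i = Fin.last N
    · subst hi
      have hHk : ∀ k, H (Fin.last N) k = if Fin.last N = k then 1 else 0 := by
        intro k
        simp [hHdef, hcr, Matrix.one_apply, hsdef, hedef, Pi.single_apply]
      simp_rw [hHk, ite_mul, one_mul, zero_mul]
      rw [Finset.sum_ite_eq Finset.univ (Fin.last N) (fun k => M2 k j)]
      simp [hM2def, hM3def]
    · have hHk : ∀ k, H i k = (if i = k then 1 else 0) + (if k = Fin.last N then -c else 0) := by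
        intro k
        by_cases hk : k = Fin.last N <;>
          simp [hHdef, hcr, Matrix.one_apply, hsdef, hedef, Pi.single_apply, hk, hi]
      simp_rw [hHk, add_mul, ite_mul, one_mul, zero_mul, Finset.sum_add_distrib]
      rw [Finset.sum_ite_eq Finset.univ i (fun k => M2 k j),
        Finset.sum_ite_eq' Finset.univ (Fin.last N) (fun k => -c * M2 k j)]
      simp only [Finset.mem_univ, if_true]
      by_cases hj : j = Fin.last N
      · subst hj
        have h2l : M2 (Fin.last N) (Fin.last N) = (N : ℝ) + 1 := by simp [hM2def]
        have h2i : M2 i (Fin.last N) = 1 := by simp [hM2def, hM1def, hi]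
        have h3i : M3 i (Fin.last N) = 0 := by simp [hM3def, hi]
        rw [h2i, h2l, h3i]
        linear_combination -hc1
      · simp [hM2def, hM3def, hM1def, hi, hj, hBapp]
  have hdetM3 : M3.det = ((N : ℝ) + 1) * ((A.submatrix Fin.castSucc Fin.castSucc).det) := by
    rw [det_succ_column M3 (Fin.last N)]
    rw [Finset.sum_eq_single (Fin.last N)]
    · have hsub : M3.submatrix (Fin.last N).succAbove (Fin.last N).succAbove
          = A.submatrix Fin.castSucc Fin.castSucc := by
        ext i j
        simp [Fin.succAbove_last, hM3def, (Fin.castSucc_lt_last i).ne, (Fin.castSucc_lt_last j).ne]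
      rw [hsub]
      have : M3 (Fin.last N) (Fin.last N) = (N : ℝ) + 1 := by simp [hM3def]
      rw [this]
      have hpow : ((-1 : ℝ)) ^ ((Fin.last N : ℕ) + (Fin.last N : ℕ)) = 1 := by
        rw [← two_mul, pow_mul]
        norm_num
      rw [Fin.val_last] at hpow ⊢
      rw [hpow]
      ring
    · intro i _ hine
      have : M3 i (Fin.last N) = 0 := by simp [hM3def, hine]
      rw [this]
      ring
    · intro h
      exact absurd (Finset.mem_univ _) h
  have hdetB : B.det = M3.det := by
    rw [← h3, ← h2, ← h1, det_mul, det_mul, det_mul, hdetF, hdetG, hdetH]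
    ring
  rw [hdetB, hdetM3]
  rw [← mul_assoc, hcdef]
  rw [inv_mul_cancel₀ hN, one_mul]
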